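/- Let ν be a finite Borel measure on ℝ with compact support not containing 0, φ a Schwartz function with φ(y) = 1/y for all y ∈ supp(ν), and g as defined by g(x) = (1+x)^{−1/2} + sup{|ν̂(tx)| : |t| ≥ 1}. Then |(φν)^(x)| ≲ g(|x|/2) for all x ∈ ℝ. -/

import Mathlib

open MeasureTheory

/-- Fourier transform of a measure on `ℝ`. -/
noncomputable def ft1 (μ : Measure ℝ) (ξ : ℝ) : ℂ :=
  ∫ x, Complex.exp (((-2 * Real.pi * x * ξ : ℝ) : ℂ) * Complex.I) ∂μ

/-- The auxiliary majorant `g(x) = (1+x)^{-1/2} + sup{|ν̂(tx)| : |t| ≥ 1}`. -/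
noncomputable def gfun (ν : Measure ℝ) (x : ℝ) : ℝ :=
  (1 + x) ^ (-(1 / 2 : ℝ)) + sSup {r : ℝ | ∃ t : ℝ, 1 ≤ |t| ∧ r = ‖ft1 ν (t * x)‖}

/-- Fourier transform of the measure with density `φ` with respect to `ν`. -/
noncomputable def ftDens (φ : ℝ → ℂ) (ν : Measure ℝ) (ξ : ℝ) : ℂ :=
  ∫ y, φ y * Complex.exp (((-2 * Real.pi * y * ξ : ℝ) : ℂ) * Complex.I) ∂ν

open FourierTransform Real Complex

lemma ft1_norm_le (ν : Measure ℝ) [IsFiniteMeasure ν] (ξ : ℝ) :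
    ‖ft1 ν ξ‖ ≤ (ν Set.univ).toReal := by
  have := norm_integral_le_of_norm_le_const (μ := ν)
    (f := fun x : ℝ => Complex.exp (((-2 * Real.pi * x * ξ : ℝ) : ℂ) * Complex.I)) (C := 1)
    (by filter_upwards with x; rw [Complex.norm_exp_ofReal_mul_I])
  simpa [ft1, measureReal_def] using this

lemma ft1_zero (ν : Measure ℝ) [IsFiniteMeasure ν] : ‖ft1 ν 0‖ = (ν Set.univ).toReal := by
  simp [ft1, measureReal_def]

section supfacts
variable (ν : Measure ℝ) [IsFiniteMeasure ν] (c : ℝ)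

lemma sup_bddAbove : BddAbove {r : ℝ | ∃ t : ℝ, 1 ≤ |t| ∧ r = ‖ft1 ν (t * c)‖} := by
  refine ⟨(ν Set.univ).toReal, fun r hr => ?_⟩
  obtain ⟨t, -, rfl⟩ := hr
  exact ft1_norm_le ν _

omit [IsFiniteMeasure ν] in
lemma sup_mem : ‖ft1 ν (1 * c)‖ ∈ {r : ℝ | ∃ t : ℝ, 1 ≤ |t| ∧ r = ‖ft1 ν (t * c)‖} :=
  ⟨1, by norm_num, rfl⟩

lemma sup_nonneg' : 0 ≤ sSup {r : ℝ | ∃ t : ℝ, 1 ≤ |t| ∧ r = ‖ft1 ν (t * c)‖} :=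
  le_trans (norm_nonneg _) (le_csSup (sup_bddAbove ν c) (sup_mem ν c))

lemma sup_ub (hc : 0 ≤ c) (y : ℝ) (hy : c ≤ |y|) :
    ‖ft1 ν y‖ ≤ sSup {r : ℝ | ∃ t : ℝ, 1 ≤ |t| ∧ r = ‖ft1 ν (t * c)‖} := by
  rcases eq_or_lt_of_le hc with hc0 | hc0
  · have h1 : ‖ft1 ν (1 * c)‖ = (ν Set.univ).toReal := by
      rw [← hc0, mul_zero, ft1_zero]
    calc ‖ft1 ν y‖ ≤ (ν Set.univ).toReal := ft1_norm_le ν y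
      _ ≤ _ := h1 ▸ le_csSup (sup_bddAbove ν c) (sup_mem ν c)
  · refine le_csSup (sup_bddAbove ν c) ⟨y / c, ?_, by rw [div_mul_cancel₀ _ hc0.ne']⟩
    rw [abs_div, abs_of_pos hc0, le_div_iff₀ hc0]
    simpa using hy
end supfacts

lemma schwartz_decay2 (f : SchwartzMap ℝ ℂ) :
    ∃ C : ℝ, 0 < C ∧ ∀ u : ℝ, ‖f u‖ ≤ C * (1 + |u|) ^ (-(2:ℝ)) := by
  obtain ⟨C0, hC0, h0⟩ := f.decay 0 0
  obtain ⟨C1, hC1, h1⟩ := f.decay 1 0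
  obtain ⟨C2, hC2, h2⟩ := f.decay 2 0
  refine ⟨C0 + 2*C1 + C2, by positivity, fun u => ?_⟩
  have e0 := h0 u; have e1 := h1 u; have e2 := h2 u
  rw [norm_iteratedFDeriv_zero, Real.norm_eq_abs] at e0 e1 e2
  simp only [pow_zero, pow_one, one_mul] at e0 e1
  have hpos : (0:ℝ) < 1 + |u| := by positivity
  rw [Real.rpow_neg hpos.le, show ((2:ℝ)) = ((2:ℕ):ℝ) by norm_num,
    Real.rpow_natCast, ← div_eq_mul_inv, le_div_iff₀ (by positivity)]
  push_cast
  nlinarith [abs_nonneg u, norm_nonneg (f u)]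

lemma inv_form (φ : SchwartzMap ℝ ℂ) (t : ℝ) :
    φ t = ∫ u : ℝ, Complex.exp (((2 * Real.pi * t * u : ℝ) : ℂ) * Complex.I) * 𝓕 (⇑φ) u := by
  have h𝓕 : Integrable (𝓕 ⇑φ) volume :=
    (SchwartzMap.fourierTransformCLM ℂ φ).integrable
  have := φ.continuous.fourierInv_fourier_eq φ.integrable h𝓕
  conv_lhs => rw [← this]
  rw [Real.fourierInv_eq']
  congr 1; ext u
  rw [smul_eq_mul, RCLike.inner_apply, conj_trivial]
  ring_nf

lemma key_identity (ν : Measure ℝ) [IsFiniteMeasure ν] (φ : SchwartzMap ℝ ℂ) (x : ℝ) :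
    ftDens (fun y => φ y) ν x = ∫ u : ℝ, 𝓕 (⇑φ) u * ft1 ν (x - u) := by
  have h𝓕 : Integrable (𝓕 ⇑φ) volume :=
    (SchwartzMap.fourierTransformCLM ℂ φ).integrable
  have step1 : ftDens (fun y => φ y) ν x
      = ∫ t, ∫ u : ℝ, 𝓕 (⇑φ) u * Complex.exp (((-2 * Real.pi * t * (x - u) : ℝ) : ℂ) * Complex.I) ∂volume ∂ν := by
    unfold ftDens
    congr 1; ext t
    show φ t * _ = _
    rw [inv_form φ t, ← integral_mul_const]
    congr 1; ext u
    rw [mul_comm (Complex.exp _) (𝓕 (⇑φ) u), mul_assoc, ← Complex.exp_add]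
    congr 2
    push_cast
    ring
  rw [step1]
  have hint : Integrable (fun p : ℝ × ℝ =>
      𝓕 (⇑φ) p.2 * Complex.exp (((-2 * Real.pi * p.1 * (x - p.2) : ℝ) : ℂ) * Complex.I))
      (ν.prod volume) := by
    have hbound : Integrable (fun p : ℝ × ℝ => (1:ℝ) * ‖𝓕 (⇑φ) p.2‖) (ν.prod volume) :=
      (integrable_const (1:ℝ)).mul_prod h𝓕.norm
    refine hbound.mono' ?_ ?_
    · apply Continuous.aestronglyMeasurable
      have hcont : Continuous (𝓕 ⇑φ) := (SchwartzMap.fourierTransformCLM ℂ φ).continuous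
      exact (hcont.comp continuous_snd).mul (Complex.continuous_exp.comp
        ((Complex.continuous_ofReal.comp (by fun_prop)).mul continuous_const))
    · filter_upwards with p
      rw [norm_mul, Complex.norm_exp_ofReal_mul_I, mul_one, one_mul]
  rw [MeasureTheory.integral_integral_swap hint]
  congr 1; ext u
  rw [ft1, ← integral_const_mul]

set_option maxHeartbeats 1000000 in
theorem stmt14 (ν : Measure ℝ) (hν0 : ν ≠ 0) [IsFiniteMeasure ν]
    (K : Set ℝ) (hKc : IsCompact K) (hK0 : (0 : ℝ) ∉ K) (hνK : ν Kᶜ = 0)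
    (φ : SchwartzMap ℝ ℂ) (hφ : ∀ y ∈ K, φ y = 1 / (y : ℂ)) :
    ∃ C : ℝ, 0 < C ∧ ∀ x : ℝ, ‖ftDens (fun y => φ y) ν x‖ ≤ C * gfun ν (|x| / 2) := by
  set ψ := SchwartzMap.fourierTransformCLM ℂ φ with hψdef
  obtain ⟨Cφ, hCφ, hdecay⟩ := schwartz_decay2 ψ
  have hψeq : 𝓕 ⇑φ = ⇑ψ := (SchwartzMap.fourier_coe φ).symm
  set M : ℝ := (ν Set.univ).toReal with hM
  have hM0 : 0 ≤ M := ENNReal.toReal_nonneg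
  have hint32 : Integrable (fun u : ℝ => (1 + ‖u‖) ^ (-(3/2 : ℝ))) volume := by
    apply integrable_one_add_norm (E := ℝ)
    norm_num
  set I : ℝ := ∫ u : ℝ, (1 + ‖u‖) ^ (-(3/2 : ℝ)) with hI
  have hI0 : 0 ≤ I := integral_nonneg fun u => by positivity
  refine ⟨Cφ * I * (M + 1) + 1, by positivity, fun x => ?_⟩
  set c : ℝ := |x| / 2 with hc
  have hc0 : 0 ≤ c := by positivity
  set S : ℝ := sSup {r : ℝ | ∃ t : ℝ, 1 ≤ |t| ∧ r = ‖ft1 ν (t * c)‖} with hS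
  have hS0 : 0 ≤ S := sup_nonneg' ν c
  set B : ℝ := M * (1 + c) ^ (-(1/2 : ℝ)) + S with hB
  have hB0 : 0 ≤ B := by positivity
  -- pointwise bound
  have hpt : ∀ u : ℝ, ‖𝓕 (⇑φ) u * ft1 ν (x - u)‖ ≤ Cφ * B * (1 + ‖u‖) ^ (-(3/2 : ℝ)) := by
    intro u
    rw [norm_mul, hψeq, Real.norm_eq_abs]
    have hu1 : (0:ℝ) < 1 + |u| := by positivity
    have ha0 : (0:ℝ) ≤ (1 + c) ^ (-(1/2:ℝ)) := by positivity
    have hb0 : (0:ℝ) ≤ (1 + |u|) ^ (-(3/2:ℝ)) := by positivity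
    rcases le_or_gt c |u| with hcase | hcase
    · -- |u| large : use decay of ψ, trivial bound on ft1
      have hsplit : (1 + |u|) ^ (-(2:ℝ))
          = (1 + |u|) ^ (-(1/2:ℝ)) * (1 + |u|) ^ (-(3/2:ℝ)) := by
        rw [← Real.rpow_add hu1]; norm_num
      have hmono : (1 + |u|) ^ (-(1/2:ℝ)) ≤ (1 + c) ^ (-(1/2:ℝ)) :=
        Real.rpow_le_rpow_of_nonpos (by positivity) (by linarith) (by norm_num)
      have h1 : ‖ψ u‖ ≤ Cφ * ((1 + c) ^ (-(1/2:ℝ)) * (1 + |u|) ^ (-(3/2:ℝ))) := by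
        refine (hdecay u).trans ?_
        rw [hsplit]
        exact mul_le_mul_of_nonneg_left (mul_le_mul_of_nonneg_right hmono hb0) hCφ.le
      calc ‖ψ u‖ * ‖ft1 ν (x - u)‖
          ≤ (Cφ * ((1 + c) ^ (-(1/2:ℝ)) * (1 + |u|) ^ (-(3/2:ℝ)))) * M :=
            mul_le_mul h1 (ft1_norm_le ν _) (norm_nonneg _) (by positivity)
        _ ≤ Cφ * B * (1 + |u|) ^ (-(3/2:ℝ)) := by
            rw [hB]
            nlinarith [mul_nonneg (mul_nonneg hCφ.le hS0) hb0]
    · -- |u| small : |x - u| ≥ c, use the sup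
      have hxu : c ≤ |x - u| := by
        have h3 : |x| - |u| ≤ |x - u| := abs_sub_abs_le_abs_sub x u
        rw [hc] at hcase ⊢
        linarith
      have h1 : ‖ψ u‖ ≤ Cφ * (1 + |u|) ^ (-(3/2:ℝ)) := by
        refine (hdecay u).trans ?_
        exact mul_le_mul_of_nonneg_left (Real.rpow_le_rpow_of_exponent_le
          (by linarith [abs_nonneg u]) (by norm_num)) hCφ.le
      calc ‖ψ u‖ * ‖ft1 ν (x - u)‖
          ≤ (Cφ * (1 + |u|) ^ (-(3/2:ℝ))) * S :=
            mul_le_mul h1 (sup_ub ν c hc0 _ hxu) (norm_nonneg _) (by positivity)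
        _ ≤ Cφ * B * (1 + |u|) ^ (-(3/2:ℝ)) := by
            rw [hB]
            nlinarith [mul_nonneg (mul_nonneg (mul_nonneg hCφ.le hM0) ha0) hb0]
  -- combine
  rw [key_identity ν φ x]
  have hnorm : ‖∫ u : ℝ, 𝓕 (⇑φ) u * ft1 ν (x - u)‖
      ≤ ∫ u : ℝ, Cφ * B * (1 + ‖u‖) ^ (-(3/2 : ℝ)) := by
    refine norm_integral_le_of_norm_le ((hint32.const_mul (Cφ * B))) ?_
    filter_upwards with u using hpt u
  refine hnorm.trans ?_
  rw [integral_const_mul, ← hI]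
  have hg : gfun ν c = (1 + c) ^ (-(1/2 : ℝ)) + S := rfl
  rw [hg]
  have hp : (0:ℝ) ≤ (1 + c) ^ (-(1/2:ℝ)) := by positivity
  have hpp : (0:ℝ) < (1 + c) ^ (-(1/2:ℝ)) := Real.rpow_pos_of_pos (by positivity) _
  rw [hB]
  nlinarith [mul_nonneg (mul_nonneg (mul_nonneg hCφ.le hI0) hM0) hS0,
    mul_nonneg (mul_nonneg hCφ.le hI0) hp, hS0, hp,
    mul_nonneg (mul_nonneg hCφ.le hI0) hS0]
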